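/- Let Δ = {(η₁,η₂,η₃) ∈ ℝ³ : ηᵢ > 0, η₁ + η₂ + η₃ < 1} and define ψ : Δ → ℝ by ψ(η) = ¼(η₁ ln η₁ + η₂ ln η₂ + η₃ ln η₃ + η₄ ln η₄) where η₄ = 1 − η₁ − η₂ − η₃. Then ∇ψ(η) = ¼(ln(η₁/η₄), ln(η₂/η₄), ln(η₃/η₄)), and the dual Hessian potential satisfies ⟨∇ψ(η), η⟩ − ψ(η) = −¼ ln(1 − η₁ − η₂ − η₃) for all η ∈ Δ. (These are the dual Hessian coordinates and dual Hessian potential of the generic system (S3) on the round 3-sphere; in particular this Hessian structure is not self-dual.) -/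

import Mathlib

open Real Set

/-- The Hessian potential of the generic system (S3) on the round 3-sphere
in its Hessian coordinates, defined on the open simplex `Δ ⊆ ℝ³`; here
`η₄ = 1 − η₁ − η₂ − η₃`. -/
noncomputable def ψ (a b c : ℝ) : ℝ :=
  (a * log a + b * log b + c * log c
    + (1 - a - b - c) * log (1 - a - b - c)) / 4

/-- Partial derivative with respect to the first variable. -/
noncomputable def d1 (f : ℝ → ℝ → ℝ → ℝ) (a b c : ℝ) : ℝ := deriv (fun s => f s b c) a

/-- Partial derivative with respect to the second variable. -/
noncomputable def d2 (f : ℝ → ℝ → ℝ → ℝ) (a b c : ℝ) : ℝ := deriv (fun s => f a s c) b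

/-- Partial derivative with respect to the third variable. -/
noncomputable def d3 (f : ℝ → ℝ → ℝ → ℝ) (a b c : ℝ) : ℝ := deriv (fun s => f a b s) c

lemma key (D K x : ℝ) (hx : x ≠ 0) (hd : D - x ≠ 0) :
    HasDerivAt (fun s : ℝ => (s * log s + K + (D - s) * log (D - s)) / 4)
      ((log x - log (D - x)) / 4) x := by
  have h1 : HasDerivAt (fun s : ℝ => s * log s) (log x + 1) x :=
    Real.hasDerivAt_mul_log hx
  have h2 : HasDerivAt (fun s : ℝ => D - s) (-1) x := by
    exact (hasDerivAt_id' x).const_sub D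
  have h3 : HasDerivAt (fun s : ℝ => (D - s) * log (D - s))
      ((log (D - x) + 1) * (-1)) x :=
    (Real.hasDerivAt_mul_log hd).comp x h2
  have : HasDerivAt (fun s : ℝ => (s * log s + K + (D - s) * log (D - s)) / 4)
      ((log x + 1 + (log (D - x) + 1) * -1) / 4) x := ((h1.add_const K).add h3).div_const 4
  convert this using 1
  ring

/-- For the generic system (S3), with `η₄ = 1 − η₁ − η₂ − η₃`: the gradient of
`ψ` (the dual Hessian coordinates) is
`∇ψ(η) = ¼(ln(η₁/η₄), ln(η₂/η₄), ln(η₃/η₄))`, and the dual Hessian potential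
is `⟨∇ψ(η), η⟩ − ψ(η) = −¼ ln(1 − η₁ − η₂ − η₃)` on the open simplex. -/
theorem s3_dual_coordinates_and_potential :
    ∀ a b c : ℝ, 0 < a → 0 < b → 0 < c → a + b + c < 1 →
      d1 ψ a b c = (1 / 4) * log (a / (1 - a - b - c)) ∧
      d2 ψ a b c = (1 / 4) * log (b / (1 - a - b - c)) ∧
      d3 ψ a b c = (1 / 4) * log (c / (1 - a - b - c)) ∧
      d1 ψ a b c * a + d2 ψ a b c * b + d3 ψ a b c * c - ψ a b c
        = -(1 / 4) * log (1 - a - b - c) := by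
  intro a b c ha hb hc habc
  have hd : (0:ℝ) < 1 - a - b - c := by linarith
  have h1 : d1 ψ a b c = (log a - log (1 - a - b - c)) / 4 := by
    have h := key (1 - b - c) (b * log b + c * log c) a ha.ne' (by rw [show (1:ℝ) - b - c - a = 1 - a - b - c by ring]; exact hd.ne')
    have : (fun s => ψ s b c) = fun s : ℝ =>
        (s * log s + (b * log b + c * log c) + ((1 - b - c) - s) * log ((1 - b - c) - s)) / 4 := by
      funext s; unfold ψ; ring_nf
    rw [d1, this, h.deriv, show (1:ℝ) - b - c - a = 1 - a - b - c by ring]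
  have h2 : d2 ψ a b c = (log b - log (1 - a - b - c)) / 4 := by
    have h := key (1 - a - c) (a * log a + c * log c) b hb.ne' (by rw [show (1:ℝ) - a - c - b = 1 - a - b - c by ring]; exact hd.ne')
    have : (fun s => ψ a s c) = fun s : ℝ =>
        (s * log s + (a * log a + c * log c) + ((1 - a - c) - s) * log ((1 - a - c) - s)) / 4 := by
      funext s; unfold ψ; ring_nf
    rw [d2, this, h.deriv, show (1:ℝ) - a - c - b = 1 - a - b - c by ring]
  have h3 : d3 ψ a b c = (log c - log (1 - a - b - c)) / 4 := by
    have h := key (1 - a - b) (a * log a + b * log b) c hc.ne' (by rw [show (1:ℝ) - a - b - c = 1 - a - b - c by ring]; exact hd.ne')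
    have : (fun s => ψ a b s) = fun s : ℝ =>
        (s * log s + (a * log a + b * log b) + ((1 - a - b) - s) * log ((1 - a - b) - s)) / 4 := by
      funext s; unfold ψ; ring_nf
    rw [d3, this, h.deriv]
  have hlog : ∀ x : ℝ, 0 < x → log (x / (1 - a - b - c)) = log x - log (1 - a - b - c) :=
    fun x hx => log_div hx.ne' hd.ne'
  refine ⟨by rw [h1, hlog a ha]; ring, by rw [h2, hlog b hb]; ring,
    by rw [h3, hlog c hc]; ring, ?_⟩
  rw [h1, h2, h3]; unfold ψ; ring
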